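/- Let b, d be real numbers with 0 ≤ b < d, A₀ = 0, A₁ = diag(-d,d), B = (b/√2, b/√2), K = (-b/(√2 d), b/(√2 d))ᵀ, and set Z₁ = A₁ - B*K*. Then spec(Z₁) = {-√(d² - b²), √(d² - b²)} and ‖K‖ = ‖B‖ / √(dist(spec(A₀), spec(Z₁))² + ‖B‖²). -/

import Mathlib

open Matrix
open scoped Matrix.Norms.L2Operator

/-- Distance between two sets of complex numbers. -/
noncomputable def specDist (S T : Set ℂ) : ℝ := sInf (Set.image2 dist S T)

lemma norm_one_by_one' (M : Matrix (Fin 1) (Fin 1) ℂ) : ‖M‖ = ‖M 0 0‖ := by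
  have h1 : ‖(1 : Matrix (Fin 1) (Fin 1) ℂ)‖ = 1 := by
    rw [Matrix.cstar_norm_def, _root_.map_one, norm_one]
  have h : M = M 0 0 • 1 := by
    ext i j; fin_cases i; fin_cases j; simp
  nth_rewrite 1 [h]
  rw [norm_smul, h1, mul_one]

theorem stmt11 (b d : ℝ) (hb : 0 ≤ b) (hbd : b < d)
    (A₀ : Matrix (Fin 1) (Fin 1) ℂ) (hA₀ : A₀ = 0)
    (A₁ : Matrix (Fin 2) (Fin 2) ℂ) (hA₁ : A₁ = !![-(d : ℂ), 0; 0, (d : ℂ)])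
    (B : Matrix (Fin 1) (Fin 2) ℂ)
    (hB : B = !![((b / Real.sqrt 2 : ℝ) : ℂ), ((b / Real.sqrt 2 : ℝ) : ℂ)])
    (K : Matrix (Fin 2) (Fin 1) ℂ)
    (hK : K = !![((-(b / (Real.sqrt 2 * d)) : ℝ) : ℂ); ((b / (Real.sqrt 2 * d) : ℝ) : ℂ)])
    (Z₁ : Matrix (Fin 2) (Fin 2) ℂ) (hZ₁ : Z₁ = A₁ - Bᴴ * Kᴴ) :
    spectrum ℂ Z₁ = {(-(Real.sqrt (d ^ 2 - b ^ 2)) : ℂ), ((Real.sqrt (d ^ 2 - b ^ 2) : ℝ) : ℂ)} ∧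
      ‖K‖ = ‖B‖ / Real.sqrt ((specDist (spectrum ℂ A₀) (spectrum ℂ Z₁)) ^ 2 + ‖B‖ ^ 2) := by
  have hd : 0 < d := lt_of_le_of_lt hb hbd
  have hd0 : (d : ℝ) ≠ 0 := ne_of_gt hd
  set s : ℝ := Real.sqrt (d ^ 2 - b ^ 2) with hs
  have hs0 : 0 ≤ s := Real.sqrt_nonneg _
  have hs2 : s ^ 2 = d ^ 2 - b ^ 2 := Real.sq_sqrt (by nlinarith)
  -- B conj-transpose times K conj-transpose, explicitly
  have hc : (b / Real.sqrt 2 : ℝ) * (b / (Real.sqrt 2 * d)) = b ^ 2 / (2 * d) := by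
    rw [div_mul_div_comm, ← mul_assoc, Real.mul_self_sqrt (by norm_num), ← sq, mul_comm (2:ℝ) d]
  have hBK : Bᴴ * Kᴴ = !![-((b^2/(2*d) : ℝ) : ℂ), ((b^2/(2*d) : ℝ) : ℂ);
      -((b^2/(2*d) : ℝ) : ℂ), ((b^2/(2*d) : ℝ) : ℂ)] := by
    rw [hB, hK]
    ext i j
    fin_cases i <;> fin_cases j <;>
      simp [Matrix.mul_apply, Fin.sum_univ_one, Matrix.conjTranspose_apply, Complex.conj_ofReal,
        ← Complex.ofReal_neg, ← Complex.ofReal_mul] <;> norm_cast <;> rw [← hc] <;> ring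
  -- the spectrum of Z₁
  have hspec : spectrum ℂ Z₁ = {(-s : ℂ), ((s : ℝ) : ℂ)} := by
    have hdet : ∀ μ : ℂ, ((algebraMap ℂ (Matrix (Fin 2) (Fin 2) ℂ)) μ - Z₁).det
        = (μ - (-s : ℂ)) * (μ - (s : ℂ)) := by
      intro μ
      rw [Matrix.det_fin_two, hZ₁, hA₁, hBK]
      simp [Matrix.algebraMap_matrix_apply]
      have hdC : ((d:ℂ)) ≠ 0 := by exact_mod_cast hd0
      have hs2C : ((s:ℂ)) ^ 2 = (d:ℂ) ^ 2 - (b:ℂ) ^ 2 := by exact_mod_cast hs2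
      field_simp
      ring_nf
      linear_combination ((4*d^2 : ℂ)) * hs2C
    ext μ
    rw [spectrum.mem_iff, Matrix.isUnit_iff_isUnit_det, isUnit_iff_ne_zero, not_ne_iff, hdet,
      mul_eq_zero, sub_eq_zero, sub_eq_zero]
    simp [Set.mem_insert_iff]
  -- spectral distance
  have hA0spec : spectrum ℂ A₀ = {0} := by rw [hA₀]; exact spectrum.zero_eq (𝕜 := ℂ)
  have hdist : specDist (spectrum ℂ A₀) (spectrum ℂ Z₁) = s := by
    rw [specDist, hA0spec, hspec]
    have : Set.image2 dist ({0} : Set ℂ) {(-s : ℂ), ((s:ℝ) : ℂ)} = {s} := by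
      rw [Set.image2_singleton_left]
      rw [Set.image_insert_eq, Set.image_singleton]
      have h1 : dist (0:ℂ) (-(s:ℂ)) = s := by
        rw [Complex.dist_eq]
        simp [Complex.norm_real, abs_of_nonneg hs0]
      have h2 : dist (0:ℂ) ((s:ℝ):ℂ) = s := by
        rw [Complex.dist_eq]
        simp [Complex.norm_real, abs_of_nonneg hs0]
      rw [h1, h2, Set.insert_eq_self]
      exact rfl
    rw [this, csInf_singleton]
  -- norm of K
  have hKn : ‖K‖ = b / d := by
    have h := Matrix.l2_opNorm_conjTranspose_mul_self K
    have hKK : (Kᴴ * K) = !![((b^2/d^2 : ℝ) : ℂ)] := by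
      rw [hK]
      ext i j
      fin_cases i; fin_cases j
      simp [Matrix.mul_apply, Fin.sum_univ_two, Matrix.conjTranspose_apply, Complex.conj_ofReal,
        ← Complex.ofReal_neg, ← Complex.ofReal_mul]
      norm_cast
      rw [div_mul_div_comm, mul_mul_mul_comm, Real.mul_self_sqrt (by norm_num), ← sq]
      ring
    rw [hKK, norm_one_by_one'] at h
    have hval : ‖(!![((b^2/d^2 : ℝ) : ℂ)] : Matrix (Fin 1) (Fin 1) ℂ) 0 0‖ = b^2/d^2 := by
      simp [Complex.norm_real, abs_of_nonneg (by positivity : (0:ℝ) ≤ b^2/d^2)]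
    rw [hval] at h
    have h2 : ‖K‖ ^ 2 = (b/d) ^ 2 := by rw [sq, ← h, div_pow]
    calc ‖K‖ = Real.sqrt (‖K‖ ^ 2) := (Real.sqrt_sq (norm_nonneg K)).symm
      _ = Real.sqrt ((b/d)^2) := by rw [h2]
      _ = b / d := Real.sqrt_sq (by positivity)
  -- norm of B
  have hBn : ‖B‖ = b := by
    have h := Matrix.l2_opNorm_conjTranspose_mul_self Bᴴ
    rw [Matrix.conjTranspose_conjTranspose, Matrix.l2_opNorm_conjTranspose] at h
    have hBB : (B * Bᴴ) = !![((b^2 : ℝ) : ℂ)] := by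
      rw [hB]
      ext i j
      fin_cases i; fin_cases j
      simp [Matrix.mul_apply, Fin.sum_univ_two, Matrix.conjTranspose_apply, Complex.conj_ofReal,
        ← Complex.ofReal_mul]
      norm_cast
      rw [div_mul_div_comm, Real.mul_self_sqrt (by norm_num), ← sq]
      ring
    rw [hBB, norm_one_by_one'] at h
    have hval : ‖(!![((b^2 : ℝ) : ℂ)] : Matrix (Fin 1) (Fin 1) ℂ) 0 0‖ = b^2 := by
      simp [Complex.norm_real, abs_of_nonneg (by positivity : (0:ℝ) ≤ b^2)]
    rw [hval] at h
    have h2 : ‖B‖ ^ 2 = b ^ 2 := by rw [sq, ← h]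
    calc ‖B‖ = Real.sqrt (‖B‖ ^ 2) := (Real.sqrt_sq (norm_nonneg B)).symm
      _ = Real.sqrt (b^2) := by rw [h2]
      _ = b := Real.sqrt_sq hb
  refine ⟨hspec, ?_⟩
  rw [hKn, hBn, hdist, hs2]
  have : d ^ 2 - b ^ 2 + b ^ 2 = d ^ 2 := by ring
  rw [this, Real.sqrt_sq hd.le]
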